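/- The grand generating function F(u,x) = ∑_{n≥1} x^n φ_n(u), where φ_n(u) = (1/n!)∑_{p=1}^n ∑_{π∈S_n} u^{χ(π,p)} with χ the move-count statistic, satisfies F(u,x) = (u/(2-u))·[(1-x)^{-2} - (1-x)^{-u}] as formal power series. -/

import Mathlib

/-- The number of moves of a symbol in the Fisher–Yates algorithm, defined
recursively via the triangular decomposition.  At stage `k+1` (symbols
`0,…,k+1`), `q = π⁻¹(k+1)` is the position of the last symbol and
`σ = π ∘ τ(k+1,q)` fixes `k+1`.  The final trivial swap is counted (base
case `1`). -/
def movesAux {N : ℕ} : ℕ → Equiv.Perm (Fin N) → Fin N → ℕ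
  | 0, _, _ => 1
  | k + 1, π, p =>
    if h : k + 1 < N then
      let lst : Fin N := ⟨k + 1, h⟩
      let q := π⁻¹ lst
      if p = lst then
        if q = lst then 1 else 1 + movesAux k (π * Equiv.swap lst q) q
      else if p = q then 1 else movesAux k (π * Equiv.swap lst q) p
    else 1

open Finset

lemma perm_apply_inv_self' {α : Type*} (f : Equiv.Perm α) (x : α) : f (f⁻¹ x) = x :=
  f.apply_symm_apply x

def Fk (N k : ℕ) : Finset (Equiv.Perm (Fin N)) :=
  Finset.univ.filter fun π => ∀ i : Fin N, k < (i : ℕ) → π i = i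

lemma mem_Fk {N k : ℕ} {π : Equiv.Perm (Fin N)} :
    π ∈ Fk N k ↔ ∀ i : Fin N, k < (i : ℕ) → π i = i := by
  simp [Fk]

lemma Fk_zero (N : ℕ) : Fk N 0 = {1} := by
  ext π
  simp only [mem_Fk, Finset.mem_singleton]
  constructor
  · intro hp
    ext i
    simp only [Equiv.Perm.one_apply]
    by_cases hi : 0 < (i : ℕ)
    · rw [hp i hi]
    · by_cases hπ : 0 < ((π i : Fin N) : ℕ)
      · have h2 : π (π i) = π i := hp (π i) hπ
        rw [π.injective h2]
      · omega
  · rintro rfl i _; rfl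

lemma Fk_inv_apply {N k : ℕ} {σ : Equiv.Perm (Fin N)} (hσ : σ ∈ Fk N k)
    {i : Fin N} (hi : k < (i : ℕ)) : σ⁻¹ i = i := by
  conv_lhs => rw [← mem_Fk.1 hσ i hi]
  simp

lemma key_inv {N k : ℕ} (h : k + 1 < N) {σ : Equiv.Perm (Fin N)} (hσ : σ ∈ Fk N k)
    (q : Fin N) :
    (σ * Equiv.swap ⟨k+1, h⟩ q)⁻¹ ⟨k+1, h⟩ = q := by
  rw [mul_inv_rev, Equiv.Perm.mul_apply, Fk_inv_apply hσ (by simp), Equiv.swap_inv,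
    Equiv.swap_apply_left]

lemma sum_Fk_succ {M : Type*} [AddCommMonoid M] {N k : ℕ} (h : k + 1 < N)
    (f : Equiv.Perm (Fin N) → M) :
    ∑ π ∈ Fk N (k+1), f π =
      ∑ q ∈ Finset.univ.filter (fun q : Fin N => (q : ℕ) ≤ k+1), ∑ σ ∈ Fk N k,
        f (σ * Equiv.swap ⟨k+1, h⟩ q) := by
  rw [← Finset.sum_product']
  refine Finset.sum_nbij'
    (i := fun π => (π⁻¹ ⟨k+1,h⟩, π * Equiv.swap ⟨k+1,h⟩ (π⁻¹ ⟨k+1,h⟩)))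
    (j := fun x => x.2 * Equiv.swap ⟨k+1,h⟩ x.1) ?_ ?_ ?_ ?_ ?_
  · intro π hπ
    rw [Finset.mem_product]
    constructor
    · simp only [Finset.mem_filter, Finset.mem_univ, true_and]
      by_contra hq
      push_neg at hq
      have h1 := mem_Fk.1 hπ (π⁻¹ ⟨k+1,h⟩) hq
      rw [perm_apply_inv_self'] at h1
      rw [← h1] at hq
      exact absurd hq (by simp)
    · rw [mem_Fk]
      intro i hi
      rcases Nat.lt_or_ge (k+1) (i : ℕ) with hi2 | hi2
      · have h1 : Equiv.swap (⟨k+1,h⟩ : Fin N) (π⁻¹ ⟨k+1,h⟩) i = i := by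
          apply Equiv.swap_apply_of_ne_of_ne
          · intro hc; rw [hc] at hi2; exact absurd hi2 (by simp)
          · intro hc
            have h2 : π i = ⟨k+1,h⟩ := by rw [hc, perm_apply_inv_self']
            have h3 := mem_Fk.1 hπ i hi2
            rw [h3] at h2
            rw [h2] at hi2
            exact absurd hi2 (by simp)
        rw [Equiv.Perm.mul_apply, h1]
        exact mem_Fk.1 hπ i (by omega)
      · have hie : i = (⟨k+1,h⟩ : Fin N) := Fin.ext (le_antisymm hi2 hi)
        rw [hie, Equiv.Perm.mul_apply, Equiv.swap_apply_left, perm_apply_inv_self']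
  · rintro ⟨q, σ⟩ hqσ
    rw [Finset.mem_product] at hqσ
    obtain ⟨hq, hσ⟩ := hqσ
    simp only [Finset.mem_filter, Finset.mem_univ, true_and] at hq
    rw [mem_Fk]
    intro i hi
    have h1 : Equiv.swap (⟨k+1,h⟩ : Fin N) q i = i := by
      apply Equiv.swap_apply_of_ne_of_ne
      · intro hc; rw [hc] at hi; exact absurd hi (by simp)
      · intro hc; rw [hc] at hi; omega
    rw [Equiv.Perm.mul_apply, h1]
    exact mem_Fk.1 hσ i (by omega)
  · intro π hπ
    simp [mul_assoc, Equiv.swap_mul_self]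
  · rintro ⟨q, σ⟩ hqσ
    rw [Finset.mem_product] at hqσ
    obtain ⟨hq, hσ⟩ := hqσ
    have h1 := key_inv h hσ q
    simp only [h1, mul_assoc, Equiv.swap_mul_self, mul_one]
  · intro π hπ
    simp [mul_assoc, Equiv.swap_mul_self]

lemma movesAux_step {N k : ℕ} (h : k+1 < N) {σ : Equiv.Perm (Fin N)} (hσ : σ ∈ Fk N k)
    (q p : Fin N) :
    movesAux (k+1) (σ * Equiv.swap ⟨k+1,h⟩ q) p =
      if p = ⟨k+1,h⟩ then (if q = ⟨k+1,h⟩ then 1 else 1 + movesAux k σ q)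
      else if p = q then 1 else movesAux k σ p := by
  have hq := key_inv h hσ q
  rw [movesAux, dif_pos h]
  simp only [hq, mul_assoc, Equiv.swap_mul_self, mul_one]

def G (N k : ℕ) (u : ℚ) : ℚ :=
  ∑ p ∈ Finset.univ.filter (fun p : Fin N => (p : ℕ) ≤ k),
    ∑ π ∈ Fk N k, u ^ movesAux k π p

lemma card_filter_le {N m : ℕ} (h : m < N) :
    (Finset.univ.filter (fun q : Fin N => (q : ℕ) ≤ m)).card = m + 1 := by
  rw [← Finset.card_range (m+1)]
  refine Finset.card_nbij' (fun q : Fin N => (q : ℕ))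
    (fun a => if ha : a < N then (⟨a, ha⟩ : Fin N) else ⟨0, by omega⟩) ?_ ?_ ?_ ?_
  · intro q hq
    simp only [Finset.coe_filter, Set.mem_setOf_eq, Finset.mem_coe, Finset.mem_filter, Finset.mem_univ, true_and] at hq
    simp only [Finset.coe_range, Set.mem_Iio, Finset.mem_coe, Finset.mem_range]
    omega
  · intro a ha
    simp only [Finset.coe_range, Set.mem_Iio, Finset.mem_coe, Finset.mem_range] at ha
    have haN : a < N := by omega
    simp only [dif_pos haN, Finset.coe_filter, Set.mem_setOf_eq, Finset.mem_coe, Finset.mem_filter, Finset.mem_univ, true_and]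
    omega
  · intro q hq
    simp only [dif_pos q.isLt]
  · intro a ha
    simp only [Finset.coe_range, Set.mem_Iio, Finset.mem_coe, Finset.mem_range] at ha
    have haN : a < N := by omega
    simp only [dif_pos haN]

lemma card_Fk {N : ℕ} : ∀ k, k < N → (Fk N k).card = (k+1).factorial := by
  intro k
  induction k with
  | zero => intro _; rw [Fk_zero]; simp
  | succ k ih =>
    intro h
    have hc := sum_Fk_succ (M := ℕ) h (fun _ => 1)
    simp only [Finset.sum_const, smul_eq_mul, mul_one] at hc
    rw [hc, card_filter_le h, ih (by omega)]
    exact (Nat.factorial_succ (k+1)).symm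

lemma filter_le_succ {N k : ℕ} (h : k + 1 < N) :
    Finset.univ.filter (fun p : Fin N => (p : ℕ) ≤ k+1)
      = insert ⟨k+1,h⟩ (Finset.univ.filter (fun p : Fin N => (p : ℕ) ≤ k)) := by
  ext q
  simp only [Finset.mem_filter, Finset.mem_univ, true_and, Finset.mem_insert, Fin.ext_iff]
  omega

lemma G_succ {N k : ℕ} (h : k + 1 < N) (u : ℚ) :
    G N (k+1) u = (u + (k:ℚ) + 1) * G N k u + u * ((k:ℚ)+2) * (k+1).factorial := by
  have hk : k < N := by omega
  have hCk : ((Fk N k).card : ℚ) = (k+1).factorial := by rw [card_Fk k hk]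
  have hPk : (Finset.univ.filter (fun p : Fin N => (p : ℕ) ≤ k)).card = k + 1 :=
    card_filter_le hk
  have hlstnot : (⟨k+1,h⟩ : Fin N) ∉ Finset.univ.filter (fun p : Fin N => (p : ℕ) ≤ k) := by
    simp
  have stepLst : ∑ π ∈ Fk N (k+1), u ^ movesAux (k+1) π ⟨k+1,h⟩
      = ∑ q ∈ Finset.univ.filter (fun q : Fin N => (q:ℕ) ≤ k+1), ∑ σ ∈ Fk N k,
          u ^ (if q = ⟨k+1,h⟩ then 1 else 1 + movesAux k σ q) := by
    rw [sum_Fk_succ h]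
    refine Finset.sum_congr rfl fun q hq => Finset.sum_congr rfl fun σ hσ => ?_
    rw [movesAux_step h hσ q ⟨k+1,h⟩, if_pos rfl]
  have stepP : ∀ p : Fin N, p ≠ ⟨k+1,h⟩ →
      ∑ π ∈ Fk N (k+1), u ^ movesAux (k+1) π p
        = ∑ q ∈ Finset.univ.filter (fun q : Fin N => (q:ℕ) ≤ k+1), ∑ σ ∈ Fk N k,
            u ^ (if p = q then 1 else movesAux k σ p) := by
    intro p hpne
    rw [sum_Fk_succ h]
    refine Finset.sum_congr rfl fun q hq => Finset.sum_congr rfl fun σ hσ => ?_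
    rw [movesAux_step h hσ q p, if_neg hpne]
  have T1 : ∑ π ∈ Fk N (k+1), u ^ movesAux (k+1) π ⟨k+1,h⟩
      = ((k+1).factorial : ℚ) * u + u * G N k u := by
    rw [stepLst, filter_le_succ h, Finset.sum_insert hlstnot]
    have e1 : ∀ σ ∈ Fk N k,
        u ^ (if (⟨k+1,h⟩ : Fin N) = ⟨k+1,h⟩ then 1
             else 1 + movesAux k σ (⟨k+1,h⟩ : Fin N)) = u :=
      fun σ _ => by rw [if_pos rfl, pow_one]
    rw [Finset.sum_congr rfl e1, Finset.sum_const, nsmul_eq_mul, hCk]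
    have e2 : ∀ q ∈ Finset.univ.filter (fun q : Fin N => (q:ℕ) ≤ k),
        (∑ σ ∈ Fk N k, u ^ (if q = (⟨k+1,h⟩ : Fin N) then 1 else 1 + movesAux k σ q))
          = u * ∑ σ ∈ Fk N k, u ^ movesAux k σ q := by
      intro q hq
      have hqne : q ≠ (⟨k+1,h⟩ : Fin N) := by
        simp only [Finset.mem_filter, Finset.mem_univ, true_and] at hq
        intro hc; rw [hc] at hq; simp at hq
      calc (∑ σ ∈ Fk N k, u ^ (if q = (⟨k+1,h⟩ : Fin N) then 1 else 1 + movesAux k σ q))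
          = ∑ σ ∈ Fk N k, u * u ^ movesAux k σ q := by
            refine Finset.sum_congr rfl fun σ _ => ?_
            rw [if_neg hqne, pow_add, pow_one]
        _ = u * ∑ σ ∈ Fk N k, u ^ movesAux k σ q := (Finset.mul_sum _ _ _).symm
    rw [Finset.sum_congr rfl e2, ← Finset.mul_sum, G]
  have T2 : ∀ p ∈ Finset.univ.filter (fun p : Fin N => (p:ℕ) ≤ k),
      ∑ π ∈ Fk N (k+1), u ^ movesAux (k+1) π p
        = ((k:ℚ)+1) * (∑ σ ∈ Fk N k, u ^ movesAux k σ p) + ((k+1).factorial : ℚ) * u := by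
    intro p hp
    have hpk : (p:ℕ) ≤ k := by simpa using hp
    have hpne : p ≠ (⟨k+1,h⟩ : Fin N) := by
      intro hc; rw [hc] at hpk; simp at hpk
    rw [stepP p hpne, filter_le_succ h, Finset.sum_insert hlstnot]
    have e1 : ∀ σ ∈ Fk N k,
        u ^ (if p = (⟨k+1,h⟩ : Fin N) then 1 else movesAux k σ p)
          = u ^ movesAux k σ p := fun σ _ => by rw [if_neg hpne]
    rw [Finset.sum_congr rfl e1]
    have e2 : ∀ q ∈ Finset.univ.filter (fun q : Fin N => (q:ℕ) ≤ k),
        (∑ σ ∈ Fk N k, u ^ (if p = q then 1 else movesAux k σ p))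
          = (∑ σ ∈ Fk N k, u ^ movesAux k σ p)
            + (if p = q then (((k+1).factorial : ℚ) * u - ∑ σ ∈ Fk N k, u ^ movesAux k σ p)
               else 0) := by
      intro q hq
      by_cases hpq : p = q
      · have e3 : ∀ σ ∈ Fk N k, u ^ (if p = q then 1 else movesAux k σ p) = u :=
          fun σ _ => by rw [if_pos hpq, pow_one]
        rw [Finset.sum_congr rfl e3, Finset.sum_const, nsmul_eq_mul, hCk, if_pos hpq]
        ring
      · have e3 : ∀ σ ∈ Fk N k, u ^ (if p = q then 1 else movesAux k σ p)
            = u ^ movesAux k σ p := fun σ _ => by rw [if_neg hpq]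
        rw [Finset.sum_congr rfl e3, if_neg hpq, add_zero]
    rw [Finset.sum_congr rfl e2, Finset.sum_add_distrib, Finset.sum_ite_eq, if_pos hp,
      Finset.sum_const, hPk, nsmul_eq_mul]
    push_cast
    ring
  rw [G, filter_le_succ h, Finset.sum_insert hlstnot, T1, Finset.sum_congr rfl T2,
    Finset.sum_add_distrib, Finset.sum_const, hPk, nsmul_eq_mul, ← Finset.mul_sum, ← G]
  push_cast
  ring

lemma G_zero {N : ℕ} (h : 0 < N) (u : ℚ) : G N 0 u = u := by
  have hfil : Finset.univ.filter (fun p : Fin N => (p : ℕ) ≤ 0) = {(⟨0,h⟩ : Fin N)} := by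
    ext q
    simp only [Finset.mem_filter, Finset.mem_univ, true_and, Finset.mem_singleton, Fin.ext_iff]
    omega
  rw [G, Fk_zero, hfil]
  simp [movesAux]

lemma G_formula {N : ℕ} (u : ℚ) : ∀ k, k < N →
    (2 - u) * G N k u
      = u * (((k+2).factorial : ℚ) - ∏ j ∈ Finset.range (k+1), (u + j)) := by
  intro k
  induction k with
  | zero =>
    intro h
    rw [G_zero h]
    simp [Nat.factorial]
    ring
  | succ k ih =>
    intro h
    have ihk := ih (by omega)
    rw [G_succ h, Finset.prod_range_succ]
    have hfac2 : ((k+2).factorial : ℚ) = ((k:ℚ)+2) * (k+1).factorial := by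
      rw [show k+2 = (k+1)+1 from rfl, Nat.factorial_succ]
      push_cast; ring
    have hfac : ((k+1+2).factorial : ℚ) = ((k:ℚ)+3) * (((k:ℚ)+2) * (k+1).factorial) := by
      rw [show k+1+2 = (k+2)+1 from rfl, Nat.factorial_succ,
        show k+2 = (k+1)+1 from rfl, Nat.factorial_succ]
      push_cast; ring
    rw [hfac]
    rw [hfac2] at ihk
    push_cast
    linear_combination (u + (k:ℚ) + 1) * ihk

/-- `moves π p` is the number of moves of symbol `p` (0-based; paper's symbol
`p+1`) when the Fisher–Yates algorithm produces `π ∈ Sₙ`. -/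
def moves {n : ℕ} (π : Equiv.Perm (Fin n)) (p : Fin n) : ℕ :=
  movesAux (n - 1) π p

/-- `phi n p u` is the probability generating function `φ_{n,p}(u)` of the
number of moves of symbol `p` (1-based) under Fisher–Yates on `n` symbols,
evaluated at `u`. -/
def phi (n p : ℕ) (u : ℚ) : ℚ :=
  if h : 1 ≤ p ∧ p ≤ n then
    (∑ π : Equiv.Perm (Fin n), u ^ moves π ⟨p - 1, by omega⟩) / n.factorial
  else 0

/-- The grand generating function `F(u,x) = ∑_{n≥1} x^n φ_n(u)`, where
`φ_n(u) = (1/n!) ∑_{p=1}^n ∑_{π∈Sₙ} u^{χ(π,p)}`, equals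
`(u/(2-u))·[(1-x)^{-2} - (1-x)^{-u}]` as a formal power series in `x`:
coefficientwise, for every `n ≥ 1`,
`φ_n(u) = (u/(2-u))·[(n+1) - u(u+1)⋯(u+n-1)/n!]` (for every `u ≠ 2`). -/
theorem grand_pgf_moves (n : ℕ) (hn : 1 ≤ n) (u : ℚ) (hu : u ≠ 2) :
    (∑ p : Fin n, ∑ π : Equiv.Perm (Fin n), u ^ moves π p) / n.factorial =
      (u / (2 - u)) *
        (((n : ℚ) + 1) - (∏ j ∈ Finset.range n, (u + j)) / n.factorial) := by
  obtain ⟨m, rfl⟩ : ∃ m, n = m + 1 := ⟨n-1, by omega⟩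
  have hmlt : m < m + 1 := Nat.lt_succ_self m
  have hFkuniv : Fk (m+1) m = Finset.univ := by
    ext π
    simp only [mem_Fk, Finset.mem_univ, iff_true]
    intro i hi
    exact absurd i.isLt (by omega)
  have hfilU : Finset.univ.filter (fun p : Fin (m+1) => (p:ℕ) ≤ m) = Finset.univ := by
    ext p
    simp only [Finset.mem_filter, Finset.mem_univ, true_and, iff_true]
    omega
  have hG : G (m+1) m u = ∑ p : Fin (m+1), ∑ π : Equiv.Perm (Fin (m+1)), u ^ moves π p := by
    rw [G, hFkuniv, hfilU]
    rfl
  have hform := G_formula u m hmlt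
  rw [hG] at hform
  have h2u : (2:ℚ) - u ≠ 0 := sub_ne_zero.mpr (Ne.symm hu)
  have hfacne : (((m+1).factorial : ℚ)) ≠ 0 := Nat.cast_ne_zero.mpr (Nat.factorial_ne_zero _)
  have hfac : ((m+2).factorial : ℚ) = ((m:ℚ)+2) * (m+1).factorial := by
    rw [show m+2 = (m+1)+1 from rfl, Nat.factorial_succ]
    push_cast; ring
  rw [hfac] at hform
  field_simp
  push_cast
  linear_combination hform
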